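/- For every real number x ≥ 4, one has ∫₂ˣ dt/(log t)⁷ < x/(log x)⁷ + 7·( √x/(log 2)⁸ + 2⁸·x/(log x)⁸ ). -/

import Mathlib

open Real intervalIntegral

private lemma cont_aux (n : ℕ) {s : Set ℝ} (hs : ∀ t ∈ s, (2:ℝ) ≤ t) :
    ContinuousOn (fun t => 1 / Real.log t ^ n) s := by
  apply ContinuousOn.div continuousOn_const
  · exact (Real.continuousOn_log.mono (fun t ht =>
      Set.mem_compl_singleton_iff.mpr (by have := hs t ht; intro h; simp [h] at this; linarith))).pow n
  · intro t ht
    have h2 := hs t ht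
    have hl : 0 < Real.log t := Real.log_pos (by linarith)
    positivity

theorem integral_inv_log_pow_seven_lt (x : ℝ) (hx : x ≥ 4) :
    (∫ t in (2 : ℝ)..x, 1 / Real.log t ^ 7) <
      x / Real.log x ^ 7 +
        7 * (Real.sqrt x / Real.log 2 ^ 8 + 2 ^ 8 * x / Real.log x ^ 8) := by
  have h2x : (2:ℝ) ≤ x := by linarith
  have hlog2 : (0:ℝ) < Real.log 2 := Real.log_pos (by norm_num)
  have hsx2 : (2:ℝ) ≤ Real.sqrt x := by
    have h4 : Real.sqrt 4 = 2 := by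
      rw [show (4:ℝ) = 2^2 by norm_num, Real.sqrt_sq (by norm_num)]
    calc (2:ℝ) = Real.sqrt 4 := h4.symm
    _ ≤ Real.sqrt x := Real.sqrt_le_sqrt hx
  have hsxx : Real.sqrt x ≤ x := by
    have h := Real.sqrt_le_sqrt (show x ≤ x^2 by nlinarith)
    rwa [Real.sqrt_sq (by linarith)] at h
  have hlogx : (0:ℝ) < Real.log x := Real.log_pos (by linarith)
  have hlogsx : Real.log (Real.sqrt x) = Real.log x / 2 := by
    rw [Real.log_sqrt (by linarith)]
  -- FTC part
  have hderiv : ∀ t ∈ Set.uIcc (2:ℝ) x,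
      HasDerivAt (fun t => t / Real.log t ^ 7)
        (1 / Real.log t ^ 7 - 7 / Real.log t ^ 8) t := by
    intro t ht
    rw [Set.uIcc_of_le h2x] at ht
    obtain ⟨ht2, htx⟩ := ht
    have ht0 : t ≠ 0 := by positivity
    have hlt : 0 < Real.log t := Real.log_pos (by linarith)
    have hl : HasDerivAt Real.log (1/t) t := by
      simpa [one_div] using Real.hasDerivAt_log ht0
    have hp : HasDerivAt (fun t => Real.log t ^ 7)
        ((7 : ℕ) * Real.log t ^ 6 * (1/t)) t := hl.pow 7
    have hd := (hasDerivAt_id t).div hp (by positivity)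
    refine HasDerivAt.congr_deriv hd ?_
    rw [id_eq]
    field_simp
    ring
  have hint7 : IntervalIntegrable (fun t => 1 / Real.log t ^ 7) MeasureTheory.volume 2 x :=
    (cont_aux 7 (by rw [Set.uIcc_of_le h2x]; exact fun t ht => ht.1)).intervalIntegrable
  have hint8 : IntervalIntegrable (fun t => 1 / Real.log t ^ 8) MeasureTheory.volume 2 x :=
    (cont_aux 8 (by rw [Set.uIcc_of_le h2x]; exact fun t ht => ht.1)).intervalIntegrable
  have hftc : (∫ t in (2:ℝ)..x, (1 / Real.log t ^ 7 - 7 / Real.log t ^ 8)) =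
      x / Real.log x ^ 7 - 2 / Real.log 2 ^ 7 := by
    exact integral_eq_sub_of_hasDerivAt hderiv (by
      apply IntervalIntegrable.sub hint7
      have : IntervalIntegrable (fun t => 7 * (1 / Real.log t ^ 8)) MeasureTheory.volume 2 x :=
        hint8.const_mul 7
      simpa [div_eq_mul_inv] using this)
  have hsplit : (∫ t in (2:ℝ)..x, 1 / Real.log t ^ 7) =
      x / Real.log x ^ 7 - 2 / Real.log 2 ^ 7 + 7 * ∫ t in (2:ℝ)..x, 1 / Real.log t ^ 8 := by
    have h7 : IntervalIntegrable (fun t => 7 / Real.log t ^ 8) MeasureTheory.volume 2 x := by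
      have := hint8.const_mul 7; simpa [div_eq_mul_inv] using this
    have := intervalIntegral.integral_sub hint7 h7
    rw [hftc] at this
    have h7' : (∫ t in (2:ℝ)..x, 7 / Real.log t ^ 8) = 7 * ∫ t in (2:ℝ)..x, 1 / Real.log t ^ 8 := by
      rw [← intervalIntegral.integral_const_mul]
      congr 1; ext t; rw [mul_one_div]
    linarith [this, h7'.symm ▸ this]
  -- split integral at sqrt x
  have hintA : IntervalIntegrable (fun t => 1 / Real.log t ^ 8) MeasureTheory.volume 2 (Real.sqrt x) :=
    (cont_aux 8 (by rw [Set.uIcc_of_le hsx2]; exact fun t ht => ht.1)).intervalIntegrable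
  have hintB : IntervalIntegrable (fun t => 1 / Real.log t ^ 8) MeasureTheory.volume (Real.sqrt x) x :=
    (cont_aux 8 (by rw [Set.uIcc_of_le hsxx]; exact fun t ht => le_trans hsx2 ht.1)).intervalIntegrable
  have hadj : (∫ t in (2:ℝ)..Real.sqrt x, 1 / Real.log t ^ 8) +
      (∫ t in Real.sqrt x..x, 1 / Real.log t ^ 8) = ∫ t in (2:ℝ)..x, 1 / Real.log t ^ 8 :=
    intervalIntegral.integral_add_adjacent_intervals hintA hintB
  -- bound piece A
  have hA : (∫ t in (2:ℝ)..Real.sqrt x, 1 / Real.log t ^ 8) ≤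
      (Real.sqrt x - 2) * (1 / Real.log 2 ^ 8) := by
    have := intervalIntegral.integral_mono_on hsx2 hintA
      (intervalIntegrable_const)
      (fun t ht => by
        have hlt : Real.log 2 ≤ Real.log t := Real.log_le_log (by norm_num) ht.1
        have : Real.log 2 ^ 8 ≤ Real.log t ^ 8 := pow_le_pow_left₀ hlog2.le hlt 8
        exact one_div_le_one_div_of_le (by positivity) this)
    simpa [smul_eq_mul] using this
  -- bound piece B
  have hB : (∫ t in Real.sqrt x..x, 1 / Real.log t ^ 8) ≤
      (x - Real.sqrt x) * (2 ^ 8 / Real.log x ^ 8) := by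
    have := intervalIntegral.integral_mono_on hsxx hintB
      (intervalIntegrable_const)
      (fun t ht => by
        have hlt : Real.log (Real.sqrt x) ≤ Real.log t :=
          Real.log_le_log (by positivity) ht.1
        rw [hlogsx] at hlt
        have h1 : (Real.log x / 2) ^ 8 ≤ Real.log t ^ 8 :=
          pow_le_pow_left₀ (by positivity) hlt 8
        have h2 : 1 / Real.log t ^ 8 ≤ 1 / (Real.log x / 2) ^ 8 :=
          one_div_le_one_div_of_le (by positivity) h1
        calc 1 / Real.log t ^ 8 ≤ 1 / (Real.log x / 2) ^ 8 := h2
        _ = 2 ^ 8 / Real.log x ^ 8 := by rw [div_pow]; field_simp)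
    simpa [smul_eq_mul, mul_div_assoc] using this
  -- combine
  have hsqpos : (0:ℝ) < Real.sqrt x := by linarith
  have hb1 : (Real.sqrt x - 2) * (1 / Real.log 2 ^ 8) ≤ Real.sqrt x / Real.log 2 ^ 8 :=
    calc (Real.sqrt x - 2) * (1 / Real.log 2 ^ 8)
        ≤ Real.sqrt x * (1 / Real.log 2 ^ 8) :=
          mul_le_mul_of_nonneg_right (by linarith) (by positivity)
      _ = Real.sqrt x / Real.log 2 ^ 8 := mul_one_div _ _
  have hb2 : (x - Real.sqrt x) * (2 ^ 8 / Real.log x ^ 8) ≤ 2 ^ 8 * x / Real.log x ^ 8 :=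
    calc (x - Real.sqrt x) * (2 ^ 8 / Real.log x ^ 8)
        ≤ x * (2 ^ 8 / Real.log x ^ 8) :=
          mul_le_mul_of_nonneg_right (by linarith) (by positivity)
      _ = 2 ^ 8 * x / Real.log x ^ 8 := by ring
  have hpos : (0:ℝ) < 2 / Real.log 2 ^ 7 := by positivity
  rw [hsplit]
  nlinarith [hadj, hA, hB, hb1, hb2, hpos]
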